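/- Let k be a commutative ring, A a unital associative k-algebra, M an (A,A)-bimodule over k, and D : A → M an (A,A)-bimodule k-derivation (a k-linear map with D(a·b) = a•D(b) + D(a)•b for all a, b ∈ A). Then there exists a unique map f : ker μ → M that is k-linear, left A-linear and right A-linear (for the first-factor left action and second-factor right action of A on A ⊗_k A, restricted to ker μ) such that f(1 ⊗ a − a ⊗ 1) = D(a) for every a ∈ A. Moreover f is given on elements Σᵢ aᵢ ⊗ bᵢ ∈ ker μ by f(Σᵢ aᵢ ⊗ bᵢ) = Σᵢ aᵢ•D(bᵢ). (Universal property of Ω¹(A/k): Hom over the bimodule structure from Ω¹(A/k) to M is naturally isomorphic to the k-module of derivations Der_k(A,M).) -/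

import Mathlib

open scoped TensorProduct

set_option linter.unusedSectionVars false

def IsOmegaLift (k : Type*) [CommRing k] (A : Type*) [Ring A] [Algebra k A]
    (M : Type*) [AddCommGroup M] [Module k M] [Module A M] [Module Aᵐᵒᵖ M]
    (D : A → M) (f : (LinearMap.ker (LinearMap.mul' k A)) →ₗ[k] M) : Prop :=
  (∀ (a : A) (x : LinearMap.ker (LinearMap.mul' k A))
      (hx : a • (x : A ⊗[k] A) ∈ LinearMap.ker (LinearMap.mul' k A)),
    f ⟨a • (x : A ⊗[k] A), hx⟩ = a • f x) ∧
  (∀ (b : A) (x : LinearMap.ker (LinearMap.mul' k A))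
      (hx : LinearMap.lTensor A (LinearMap.mulRight k b) (x : A ⊗[k] A)
              ∈ LinearMap.ker (LinearMap.mul' k A)),
    f ⟨LinearMap.lTensor A (LinearMap.mulRight k b) (x : A ⊗[k] A), hx⟩
      = MulOpposite.op b • f x) ∧
  (∀ (a : A) (ha : ((1 : A) ⊗ₜ[k] a - a ⊗ₜ[k] (1 : A))
              ∈ LinearMap.ker (LinearMap.mul' k A)),
    f ⟨(1 : A) ⊗ₜ[k] a - a ⊗ₜ[k] (1 : A), ha⟩ = D a)

section Aux

variable {k : Type*} [CommRing k] {A : Type*} [Ring A] [Algebra k A]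
    {M : Type*} [AddCommGroup M] [Module k M] [Module A M] [Module Aᵐᵒᵖ M]
    [SMulCommClass A Aᵐᵒᵖ M] [IsScalarTower k A M] [IsScalarTower k Aᵐᵒᵖ M]
    (D : A →ₗ[k] M)

/-- The bilinear map `(a, b) ↦ a • D b`. -/
noncomputable def omegaBil : A →ₗ[k] A →ₗ[k] M :=
  LinearMap.mk₂ k (fun a b => a • D b)
    (fun a a' b => add_smul a a' (D b))
    (fun c a b => smul_assoc c a (D b))
    (fun a b b' => by rw [map_add, smul_add])
    (fun c a b => by
      rw [map_smul]
      rw [← algebraMap_smul A c (D b), smul_smul, ← Algebra.commutes, ← smul_smul,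
        algebraMap_smul])

/-- The linear map `A ⊗ A → M`, `a ⊗ b ↦ a • D b`. -/
noncomputable def omegaF : A ⊗[k] A →ₗ[k] M := TensorProduct.lift (omegaBil D)

@[simp] lemma omegaF_tmul (a b : A) : omegaF D (a ⊗ₜ[k] b) = a • D b := rfl

lemma omegaF_smul (a : A) (x : A ⊗[k] A) : omegaF D (a • x) = a • omegaF D x := by
  induction x using TensorProduct.induction_on with
  | zero => simp
  | tmul u v =>
      rw [TensorProduct.smul_tmul', smul_eq_mul, omegaF_tmul, omegaF_tmul, mul_smul]
  | add x y hx hy => rw [smul_add, map_add, hx, hy, map_add, smul_add]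

lemma omegaF_rmul (hD : ∀ a b : A, D (a * b) = a • D b + MulOpposite.op b • D a)
    (b : A) (x : A ⊗[k] A) :
    omegaF D (LinearMap.lTensor A (LinearMap.mulRight k b) x)
      = MulOpposite.op b • omegaF D x + (LinearMap.mul' k A x) • D b := by
  induction x using TensorProduct.induction_on with
  | zero => simp
  | tmul u v =>
      rw [LinearMap.lTensor_tmul, LinearMap.mulRight_apply, omegaF_tmul, omegaF_tmul,
        LinearMap.mul'_apply, hD, smul_add, smul_comm u (MulOpposite.op b), mul_smul,
        add_comm]
  | add x y hx hy =>
      rw [map_add, map_add, hx, hy, map_add, map_add, smul_add, add_smul]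
      abel

lemma D_one (hD : ∀ a b : A, D (a * b) = a • D b + MulOpposite.op b • D a) :
    D (1 : A) = 0 := by
  have := hD 1 1
  simpa using this

set_option maxHeartbeats 1000000 in
/-- Any `IsOmegaLift` map is given by the explicit formula. -/
lemma omega_key
    (f : (LinearMap.ker (LinearMap.mul' k A)) →ₗ[k] M) (hf : IsOmegaLift k A M D f)
    {ι : Type*} (t : Finset ι) (u v : ι → A)
    (hx : (∑ i ∈ t, u i ⊗ₜ[k] v i) ∈ LinearMap.ker (LinearMap.mul' k A)) :
    f ⟨∑ i ∈ t, u i ⊗ₜ[k] v i, hx⟩ = ∑ i ∈ t, u i • D (v i) := by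
  obtain ⟨h1, h2, h3⟩ := hf
  have hsum : (∑ i ∈ t, u i * v i) = 0 := by
    have h := hx
    rw [LinearMap.mem_ker, map_sum] at h
    simpa only [LinearMap.mul'_apply] using h
  have memd : ∀ a : A, ((1 : A) ⊗ₜ[k] a - a ⊗ₜ[k] (1 : A))
      ∈ LinearMap.ker (LinearMap.mul' k A) := by
    intro a; simp [LinearMap.mem_ker]
  have mem : ∀ i : ι, u i • (((1 : A) ⊗ₜ[k] v i - v i ⊗ₜ[k] (1 : A)) :
      A ⊗[k] A) ∈ LinearMap.ker (LinearMap.mul' k A) := fun i => by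
    simp [LinearMap.mem_ker, smul_sub, TensorProduct.smul_tmul', smul_eq_mul]
  have hrep : (⟨∑ i ∈ t, u i ⊗ₜ[k] v i, hx⟩ :
        LinearMap.ker (LinearMap.mul' k A))
      = ∑ i ∈ t, ⟨u i • (((1 : A) ⊗ₜ[k] v i - v i ⊗ₜ[k] (1 : A)) : A ⊗[k] A),
          mem i⟩ := by
    apply Subtype.ext
    rw [AddSubmonoidClass.coe_finset_sum]
    simp only [smul_sub, TensorProduct.smul_tmul', smul_eq_mul, mul_one]
    rw [Finset.sum_sub_distrib, ← TensorProduct.sum_tmul, hsum,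
      TensorProduct.zero_tmul, sub_zero]
  rw [hrep, map_sum]
  refine Finset.sum_congr rfl fun i _ => ?_
  have := h1 (u i) ⟨_, memd (v i)⟩ (mem i)
  rw [this, h3 (v i) (memd (v i))]

end Aux

/-- Universal property of `Ω¹(A/k) = ker μ`: every `(A,A)`-bimodule `k`-derivation
`D : A → M` factors uniquely through `d : a ↦ 1 ⊗ a − a ⊗ 1` via a map of bimodules
`f : ker μ → M`; moreover `f` is given by `Σ aᵢ ⊗ bᵢ ↦ Σ aᵢ • D bᵢ`. -/
theorem stmt7 (k : Type*) [CommRing k] (A : Type*) [Ring A] [Algebra k A]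
    (M : Type*) [AddCommGroup M] [Module k M] [Module A M] [Module Aᵐᵒᵖ M]
    [SMulCommClass A Aᵐᵒᵖ M] [IsScalarTower k A M] [IsScalarTower k Aᵐᵒᵖ M]
    (D : A →ₗ[k] M)
    (hD : ∀ a b : A, D (a * b) = a • D b + MulOpposite.op b • D a) :
    (∃! f : (LinearMap.ker (LinearMap.mul' k A)) →ₗ[k] M, IsOmegaLift k A M D f) ∧
    (∀ f : (LinearMap.ker (LinearMap.mul' k A)) →ₗ[k] M, IsOmegaLift k A M D f →
      ∀ (ι : Type) (t : Finset ι) (u v : ι → A)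
        (hx : (∑ i ∈ t, u i ⊗ₜ[k] v i) ∈ LinearMap.ker (LinearMap.mul' k A)),
        f ⟨∑ i ∈ t, u i ⊗ₜ[k] v i, hx⟩ = ∑ i ∈ t, u i • D (v i)) := by
  set K := LinearMap.ker (LinearMap.mul' k A)
  set f : K →ₗ[k] M := (omegaF D).comp K.subtype with hf_def
  have hlift : IsOmegaLift k A M D f := by
    refine ⟨?_, ?_, ?_⟩
    · intro a x hx
      simp only [hf_def, LinearMap.comp_apply, Submodule.subtype_apply]
      exact omegaF_smul D a x
    · intro b x hx
      simp only [hf_def, LinearMap.comp_apply, Submodule.subtype_apply]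
      rw [omegaF_rmul D hD b x, x.2, zero_smul, add_zero]
    · intro a ha
      simp only [hf_def, LinearMap.comp_apply, Submodule.subtype_apply]
      rw [map_sub, omegaF_tmul, omegaF_tmul, D_one D hD, one_smul, smul_zero,
        sub_zero]
  refine ⟨⟨f, hlift, ?_⟩, fun g hg ι t u v hx => omega_key D g hg t u v hx⟩
  intro g hg
  apply LinearMap.ext
  rintro ⟨x, hx⟩
  obtain ⟨S, hS⟩ := TensorProduct.exists_finset x
  have hx' : (∑ i ∈ S, i.1 ⊗ₜ[k] i.2) ∈ K := hS ▸ hx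
  have heq : (⟨x, hx⟩ : K) = ⟨∑ i ∈ S, i.1 ⊗ₜ[k] i.2, hx'⟩ := Subtype.ext hS
  rw [heq, omega_key D g hg S (fun i => i.1) (fun i => i.2) hx',
    omega_key D f hlift S (fun i => i.1) (fun i => i.2) hx']
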